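/- Let J : ℝ^d → ℝ be differentiable with L_g-Lipschitz gradient (L_g > 0), bounded above with J* = sup J, and satisfying the relaxed weak gradient domination: there exist μ > 0 and ε' ≥ 0 such that ε' + ‖∇J(θ)‖ ≥ √(2μ) (J* − J(θ)) for all θ ∈ ℝ^d. Let α > 0, let θ, d ∈ ℝ^d, and set θ' = θ + α d/‖d‖ (convention 0/‖0‖ = 0). Then J* − J(θ') ≤ (1 − α√(2μ)) (J* − J(θ)) + α ε' + 2 α ‖d − ∇J(θ)‖ + L_g α²/2. -/

import Mathlib

open InnerProductSpace

lemma fderiv_eq_inner_gradient {E : Type*} [NormedAddCommGroup E] [InnerProductSpace ℝ E]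
    [CompleteSpace E] (f : E → ℝ) (x v : E) :
    fderiv ℝ f x v = inner ℝ (gradient f x) v := by
  rw [gradient]
  exact (InnerProductSpace.toDual_symm_apply).symm

/-- Descent lemma (lower bound form): `f (x+v) ≥ f x + ⟪∇f x, v⟫ - L/2 ‖v‖²`. -/
lemma descent_lower {E : Type*} [NormedAddCommGroup E] [InnerProductSpace ℝ E]
    [CompleteSpace E] (f : E → ℝ) (L : ℝ) (hL : 0 ≤ L) (hdiff : Differentiable ℝ f)
    (hlip : ∀ x y, ‖gradient f x - gradient f y‖ ≤ L * ‖x - y‖) (x v : E) :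
    f x + inner ℝ (gradient f x) v - L / 2 * ‖v‖ ^ 2 ≤ f (x + v) := by
  set g0 : E := gradient f x with hg0
  have hline : ∀ t : ℝ, HasDerivAt (fun t : ℝ => x + t • v) v t := fun t =>
    by simpa using ((hasDerivAt_id t).smul_const v).const_add x
  have hφ : ∀ t : ℝ, HasDerivAt (fun t : ℝ => f (x + t • v))
      (inner ℝ (gradient f (x + t • v)) v) t := by
    intro t
    have := (hdiff (x + t • v)).hasFDerivAt.comp_hasDerivAt t (hline t)
    rw [fderiv_eq_inner_gradient] at this; exact this
  set h : ℝ → ℝ := fun t => f (x + t • v) - t * inner ℝ g0 v + L * t ^ 2 / 2 * ‖v‖ ^ 2 with hh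
  have hh' : ∀ t : ℝ, HasDerivAt h
      ((inner ℝ (gradient f (x + t • v)) v : ℝ) - inner ℝ g0 v + L * t * ‖v‖ ^ 2) t := by
    intro t
    have h1 : HasDerivAt (fun t : ℝ => t * (inner ℝ g0 v : ℝ)) (inner ℝ g0 v) t :=
      hasDerivAt_mul_const _
    have h2 : HasDerivAt (fun t : ℝ => L * t ^ 2 / 2 * ‖v‖ ^ 2) (L * t * ‖v‖ ^ 2) t := by
      have := ((hasDerivAt_pow 2 t).const_mul L).div_const 2
      have := this.mul_const (‖v‖ ^ 2)
      exact this.congr_deriv (by rw [show (2:ℕ) - 1 = 1 from rfl]; ring)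
    exact ((hφ t).sub h1).add h2
  have hmono : MonotoneOn h (Set.Icc 0 1) := by
    apply monotoneOn_of_deriv_nonneg (convex_Icc 0 1)
    · exact Continuous.continuousOn (by
        exact ((hdiff.continuous.comp (by continuity)).sub (by continuity)).add (by continuity))
    · intro t ht
      exact ((hh' t).differentiableAt).differentiableWithinAt
    · intro t ht
      rw [interior_Icc] at ht
      rw [(hh' t).deriv]
      have hnd : ‖gradient f (x + t • v) - g0‖ ≤ L * (t * ‖v‖) := by
        have := hlip (x + t • v) x
        simpa [norm_smul, abs_of_nonneg ht.1.le, mul_assoc] using this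
      have hin : (inner ℝ g0 v : ℝ) - inner ℝ (gradient f (x + t • v)) v ≤ L * (t * ‖v‖) * ‖v‖ := by
        have h3 : (inner ℝ (g0 - gradient f (x + t • v)) v : ℝ) ≤ ‖g0 - gradient f (x + t • v)‖ * ‖v‖ :=
          real_inner_le_norm _ _
        rw [inner_sub_left] at h3
        calc (inner ℝ g0 v : ℝ) - inner ℝ (gradient f (x + t • v)) v
            ≤ ‖g0 - gradient f (x + t • v)‖ * ‖v‖ := h3
          _ ≤ L * (t * ‖v‖) * ‖v‖ := by
              apply mul_le_mul_of_nonneg_right _ (norm_nonneg v)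
              rw [norm_sub_rev]; exact hnd
      nlinarith [norm_nonneg v, ht.1.le]
  have := hmono (Set.left_mem_Icc.2 zero_le_one) (Set.right_mem_Icc.2 zero_le_one) zero_le_one
  simp only [hh, zero_smul, one_smul, add_zero, zero_mul, one_mul] at this
  norm_num at this
  nlinarith [this]


/-- One-step contraction under relaxed weak gradient domination:
`J* − J(θ') ≤ (1 − α√(2μ))(J* − J(θ)) + αε' + 2α‖d − ∇J(θ)‖ + L_g α²/2`
for the normalized step `θ' = θ + α d/‖d‖`. -/
theorem normalized_step_gradient_domination_contraction
    {dim : ℕ} (hdim : 0 < dim)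
    (J : EuclideanSpace ℝ (Fin dim) → ℝ) (Lg mu ε' : ℝ)
    (hLg : 0 < Lg) (hmu : 0 < mu) (hε' : 0 ≤ ε')
    (hdiff : Differentiable ℝ J)
    (hlip : ∀ x y, ‖gradient J x - gradient J y‖ ≤ Lg * ‖x - y‖)
    (hbdd : BddAbove (Set.range J))
    (hdom : ∀ θ, Real.sqrt (2 * mu) * (sSup (Set.range J) - J θ) ≤ ε' + ‖gradient J θ‖)
    (α : ℝ) (hα : 0 < α) (θ dvec θ' : EuclideanSpace ℝ (Fin dim))
    (hθ' : θ' = θ + α • (‖dvec‖⁻¹ • dvec)) :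
    sSup (Set.range J) - J θ' ≤
      (1 - α * Real.sqrt (2 * mu)) * (sSup (Set.range J) - J θ)
        + α * ε' + 2 * α * ‖dvec - gradient J θ‖ + Lg * α ^ 2 / 2 := by
  set S := sSup (Set.range J) with hS
  set g := gradient J θ with hg
  set v : EuclideanSpace ℝ (Fin dim) := α • (‖dvec‖⁻¹ • dvec) with hv
  have hdesc := descent_lower J Lg hLg.le hdiff hlip θ v
  rw [← hθ'] at hdesc
  have hvnorm : ‖v‖ ≤ α := by
    rcases eq_or_ne dvec 0 with h0 | h0
    · simp [hv, h0, hα.le]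
    · have : ‖v‖ = α := by
        rw [hv, norm_smul, norm_smul, norm_inv, norm_norm,
          inv_mul_cancel₀ (norm_ne_zero_iff.2 h0)]
        simp [abs_of_pos hα]
      linarith
  have hvnn : 0 ≤ ‖v‖ := norm_nonneg _
  have hinner : α * (‖g‖ - 2 * ‖dvec - g‖) ≤ inner ℝ g v := by
    have : (inner ℝ g v : ℝ) = α * inner ℝ g (‖dvec‖⁻¹ • dvec) := by
      rw [hv, real_inner_smul_right]
    rw [this]
    apply mul_le_mul_of_nonneg_left _ hα.le
    rcases eq_or_ne dvec 0 with h0 | h0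
    · have : ‖dvec - g‖ = ‖g‖ := by rw [h0]; simp
      simp [h0, this]
      linarith [norm_nonneg g]
    · have hu : ‖(‖dvec‖⁻¹ • dvec : EuclideanSpace ℝ (Fin dim))‖ = 1 := by
        rw [norm_smul, norm_inv, norm_norm, inv_mul_cancel₀ (norm_ne_zero_iff.2 h0)]
      have hd : (inner ℝ dvec (‖dvec‖⁻¹ • dvec) : ℝ) = ‖dvec‖ := by
        rw [real_inner_smul_right, real_inner_self_eq_norm_sq]
        field_simp [norm_ne_zero_iff.2 h0]
      have hsplit : (inner ℝ g (‖dvec‖⁻¹ • dvec) : ℝ) =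
          ‖dvec‖ + inner ℝ (g - dvec) (‖dvec‖⁻¹ • dvec) := by
        rw [inner_sub_left, hd]; ring
      have hbd : (inner ℝ (g - dvec) (‖dvec‖⁻¹ • dvec) : ℝ) ≥ -‖dvec - g‖ := by
        have := real_inner_le_norm (dvec - g) (‖dvec‖⁻¹ • dvec)
        rw [hu, mul_one] at this
        have heq : (inner ℝ (g - dvec) (‖dvec‖⁻¹ • dvec) : ℝ)
            = -inner ℝ (dvec - g) (‖dvec‖⁻¹ • dvec) := by
          rw [← inner_neg_left]; norm_num
        linarith [heq ▸ neg_le_neg this]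
      have htri : ‖g‖ - ‖dvec - g‖ ≤ ‖dvec‖ := by
        have := norm_sub_norm_le g dvec
        rw [norm_sub_rev g dvec] at this
        linarith
      rw [hsplit]
      linarith
  have hSJ : 0 ≤ S - J θ := by
    have : J θ ≤ S := le_csSup hbdd (Set.mem_range_self θ)
    linarith
  have hdomθ := hdom θ
  rw [← hg] at hdomθ hdesc
  -- from descent: J θ' ≥ J θ + ⟪g,v⟫ - Lg/2 ‖v‖²
  have hv2 : ‖v‖ ^ 2 ≤ α ^ 2 := by nlinarith
  have hstep : S - J θ' ≤ S - J θ - α * ‖g‖ + 2 * α * ‖dvec - g‖ + Lg * α ^ 2 / 2 := by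
    nlinarith [hdesc, hinner, hv2]
  have hgrad : -(α * ‖g‖) ≤ -(α * Real.sqrt (2 * mu) * (S - J θ)) + α * ε' := by
    nlinarith [hdomθ, hα.le]
  linarith [hstep, hgrad]
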